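/- Let G be a connected graph of order n ≥ 3. Then diam(G) − π(G) ≤ (3n−5)/4 if n is odd, and diam(G) − π(G) ≤ (3n−5)/4 − 1/(4n−4) if n is even. -/

import Mathlib

open Finset

-- distance from start to the i-th vertex of a walk is at most i
lemma aux_dist_getVert_le {V : Type*} {G : SimpleGraph V} (hc : G.Connected) :
    ∀ {u v : V} (p : G.Walk u v) (i : ℕ), G.dist u (p.getVert i) ≤ i := by
  intro u v p
  induction p with
  | nil =>
    intro i
    rw [SimpleGraph.Walk.getVert_of_length_le _ (by simp)]
    simp [SimpleGraph.dist_self]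
  | @cons a b w h q ih =>
    intro i
    cases i with
    | zero => simp [SimpleGraph.Walk.getVert_zero, SimpleGraph.dist_self]
    | succ i =>
      rw [SimpleGraph.Walk.getVert_cons_succ]
      have t : G.dist a (q.getVert i) ≤ G.dist a b + G.dist b (q.getVert i) :=
        hc.dist_triangle
      have h1 : G.dist a b ≤ 1 := by
        have := SimpleGraph.dist_le h.toWalk
        simpa using this
      have := ih i
      omega

-- distance from i-th vertex to the end is at most length - i
lemma aux_dist_getVert_le' {V : Type*} {G : SimpleGraph V} (hc : G.Connected) :
    ∀ {u v : V} (p : G.Walk u v) (i : ℕ), G.dist (p.getVert i) v ≤ p.length - i := by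
  intro u v p
  induction p with
  | nil =>
    intro i
    rw [SimpleGraph.Walk.getVert_of_length_le _ (by simp)]
    simp [SimpleGraph.dist_self]
  | @cons a b w h q ih =>
    intro i
    cases i with
    | zero =>
      simp only [SimpleGraph.Walk.getVert_zero]
      have t : G.dist a w ≤ G.dist a b + G.dist b w := hc.dist_triangle
      have h1 : G.dist a b ≤ 1 := by
        have := SimpleGraph.dist_le h.toWalk
        simpa using this
      have := ih 0
      simp only [SimpleGraph.Walk.getVert_zero] at this
      have hl : (q.cons h).length = q.length + 1 := by simp
      omega
    | succ i =>
      rw [SimpleGraph.Walk.getVert_cons_succ]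
      have := ih i
      have hl : (q.cons h).length = q.length + 1 := by simp
      omega

lemma aux_sum_id (N : ℕ) : (∑ i ∈ Finset.range N, (i:ℤ)) * 2 = N * (N-1) := by
  cases N with
  | zero => simp
  | succ M =>
    have h := Finset.sum_range_id_mul_two (M+1)
    have : ((∑ i ∈ Finset.range (M+1), i) * 2 : ℤ) = ((M+1) * M : ℕ) := by
      exact_mod_cast congrArg (Nat.cast : ℕ → ℤ) (by simpa using h)
    push_cast at this ⊢
    linarith

lemma aux_gauss_abs (D m : ℕ) (hm1 : 2*m ≤ D) (hm2 : D ≤ 2*m+1) :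
    ∑ i ∈ Finset.range (D+1), |2*(i:ℤ) - D| = 2 * ((m+1) * ((D:ℤ) - m)) := by
  have hsplit : ∑ i ∈ Finset.Ico 0 (m+1), |2*(i:ℤ) - D|
      + ∑ i ∈ Finset.Ico (m+1) (D+1), |2*(i:ℤ) - D|
      = ∑ i ∈ Finset.Ico 0 (D+1), |2*(i:ℤ) - D| :=
    Finset.sum_Ico_consecutive _ (Nat.zero_le _) (by omega)
  have h1 : ∑ i ∈ Finset.range (m+1), |2*(i:ℤ) - D|
      = ∑ i ∈ Finset.range (m+1), ((D:ℤ) - 2*i) := by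
    refine Finset.sum_congr rfl fun i hi => ?_
    rw [Finset.mem_range] at hi
    have : (i:ℤ) ≤ m := by exact_mod_cast Nat.lt_succ_iff.mp hi
    have hD : (2*m : ℤ) ≤ D := by exact_mod_cast hm1
    rw [abs_of_nonpos (by linarith)]; ring
  have h2 : ∑ i ∈ Finset.Ico (m+1) (D+1), |2*(i:ℤ) - D|
      = ∑ i ∈ Finset.Ico (m+1) (D+1), (2*(i:ℤ) - D) := by
    refine Finset.sum_congr rfl fun i hi => ?_
    rw [Finset.mem_Ico] at hi
    have : (m:ℤ) + 1 ≤ i := by exact_mod_cast hi.1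
    have hD : (D:ℤ) ≤ 2*m+1 := by exact_mod_cast hm2
    rw [abs_of_nonneg (by linarith)]
  have e1 : ∑ i ∈ Finset.range (m+1), ((D:ℤ) - 2*i)
      = (m+1) * D - 2 * ∑ i ∈ Finset.range (m+1), (i:ℤ) := by
    rw [Finset.sum_sub_distrib, Finset.sum_const, Finset.mul_sum]
    simp [Finset.mul_sum]
  have e2 : ∑ i ∈ Finset.Ico (m+1) (D+1), (2*(i:ℤ) - D)
      = 2 * (∑ i ∈ Finset.range (D+1), (i:ℤ) - ∑ i ∈ Finset.range (m+1), (i:ℤ))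
        - ((D:ℤ) - m) * D := by
    rw [Finset.sum_sub_distrib, Finset.sum_const, Nat.card_Ico, ← Finset.sum_Ico_eq_sub _ (by omega)]
    have : ((D + 1 - (m+1) : ℕ) : ℤ) = (D:ℤ) - m := by omega
    rw [Finset.mul_sum]
    simp only [nsmul_eq_mul, this]
  have g1 := aux_sum_id (m+1)
  have g2 := aux_sum_id (D+1)
  have hDm : (2*m:ℤ) ≤ D := by exact_mod_cast hm1
  have hDm2 : (D:ℤ) ≤ 2*m+1 := by exact_mod_cast hm2
  have hcast : ((D+1:ℕ):ℤ) = (D:ℤ)+1 := by push_cast; ring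
  rw [← Finset.range_eq_Ico, ← Finset.range_eq_Ico] at hsplit
  rw [← hsplit, h1, h2, e1, e2]
  push_cast at g1 g2 ⊢
  nlinarith [g1, g2, sq_nonneg ((D:ℤ) - 2*m)]

lemma aux_key {Dz mz kz nz Sz cz : ℤ} (h0m : 0 ≤ mz) (h0k : 0 ≤ kz)
    (hS : Sz = (mz+1)*(Dz - mz)) (hn : nz = Dz + kz + 1)
    (hc : (kz = 0 ∧ cz = Sz) ∨ (1 ≤ kz ∧ cz = Sz + kz - 1)) :
    (Dz = 2*mz → 4*Dz*(nz-1) ≤ (3*nz-5)*(nz-1) + 4*cz) ∧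
    (Dz = 2*mz → 1 ≤ kz → 4*Dz*(nz-1) + 1 ≤ (3*nz-5)*(nz-1) + 4*cz) ∧
    (Dz = 2*mz+1 → 4*Dz*(nz-1) + 1 ≤ (3*nz-5)*(nz-1) + 4*cz) := by
  refine ⟨?_, ?_, ?_⟩
  · intro hD
    rcases hc with ⟨hk0, hcz⟩ | ⟨hk1, hcz⟩
    · subst hn hS hD hcz hk0
      nlinarith [sq_nonneg mz]
    · subst hn hS hD hcz
      nlinarith [mul_nonneg h0m h0k,
        mul_nonneg (by linarith : (0:ℤ) ≤ 3*kz+5) (by linarith : (0:ℤ) ≤ kz - 1)]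
  · intro hD hk1
    rcases hc with ⟨hk0, hcz⟩ | ⟨-, hcz⟩
    · omega
    · subst hn hS hD hcz
      nlinarith [mul_nonneg h0m (by linarith : (0:ℤ) ≤ kz),
        mul_nonneg (by linarith : (0:ℤ) ≤ 3*kz+5) (by linarith : (0:ℤ) ≤ kz - 1)]
  · intro hD
    rcases hc with ⟨hk0, hcz⟩ | ⟨hk1, hcz⟩
    · subst hn hS hD hcz hk0
      nlinarith [sq_nonneg mz]
    · subst hn hS hD hcz
      nlinarith [mul_nonneg h0m (by linarith : (0:ℤ) ≤ kz),
        mul_nonneg (by linarith : (0:ℤ) ≤ 3*kz+7) (by linarith : (0:ℤ) ≤ kz - 1)]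

theorem stmt1 {V : Type*} [Fintype V] [DecidableEq V] (G : SimpleGraph V)
    [DecidableRel G.Adj] (n : ℕ) (hn : Fintype.card V = n) (hconn : G.Connected) (h3 : 3 ≤ n) :
    (Odd n → (((Finset.univ.sup fun v : V => Finset.univ.sup fun w : V => G.dist v w) : ℕ) : ℝ) - (⨅ v : V, (∑ w : V, (G.dist v w : ℝ)) / ((n : ℝ) - 1)) ≤ (3 * (n : ℝ) - 5) / 4) ∧
    (Even n → (((Finset.univ.sup fun v : V => Finset.univ.sup fun w : V => G.dist v w) : ℕ) : ℝ) - (⨅ v : V, (∑ w : V, (G.dist v w : ℝ)) / ((n : ℝ) - 1)) ≤ (3 * (n : ℝ) - 5) / 4 - 1 / (4 * (n : ℝ) - 4)) := by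
  have hV : 0 < Fintype.card V := by omega
  have hne : Nonempty V := Fintype.card_pos_iff.mp hV
  set D : ℕ := (Finset.univ.sup fun v : V => Finset.univ.sup fun w : V => G.dist v w) with hDdef
  obtain ⟨u, -, hu⟩ := Finset.exists_mem_eq_sup (Finset.univ : Finset V) Finset.univ_nonempty
      (fun v : V => Finset.univ.sup fun w : V => G.dist v w)
  obtain ⟨v, -, hv⟩ := Finset.exists_mem_eq_sup (Finset.univ : Finset V) Finset.univ_nonempty
      (fun w : V => G.dist u w)
  have hDuv : G.dist u v = D := by rw [hDdef, hu, hv]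
  have hDle : ∀ x y : V, G.dist x y ≤ D := by
    intro x y
    calc G.dist x y ≤ Finset.univ.sup (fun w => G.dist x w) :=
          Finset.le_sup (Finset.mem_univ y)
      _ ≤ D := Finset.le_sup (f := fun v : V => Finset.univ.sup fun w : V => G.dist v w)
          (Finset.mem_univ x)
  obtain ⟨p, hp⟩ := hconn.exists_walk_length_eq_dist u v
  rw [hDuv] at hp
  have hExact : ∀ i, i ≤ D → G.dist u (p.getVert i) = i := by
    intro i hi
    have h1 := aux_dist_getVert_le hconn p i
    have h2 := aux_dist_getVert_le' hconn p i
    rw [hp] at h2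
    have h3 : G.dist u v ≤ G.dist u (p.getVert i) + G.dist (p.getVert i) v :=
      hconn.dist_triangle
    omega
  set m : ℕ := D / 2 with hm
  set k : ℕ := n - 1 - D with hk
  set P : Finset V := (Finset.range (D+1)).image p.getVert with hPdef
  have hinj : ∀ i ∈ Finset.range (D+1), ∀ j ∈ Finset.range (D+1),
      p.getVert i = p.getVert j → i = j := by
    intro i hi j hj hij
    rw [Finset.mem_range] at hi hj
    have e1 := hExact i (by omega)
    have e2 := hExact j (by omega)
    rw [hij] at e1
    omega
  have hcardP : P.card = D + 1 := by
    rw [hPdef, Finset.card_image_of_injOn hinj, Finset.card_range]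
  have hDn : D + 1 ≤ n := by
    have := Finset.card_le_card (Finset.subset_univ P)
    rw [Finset.card_univ, hn, hcardP] at this
    exact this
  have hcardPc : Pᶜ.card = k := by
    rw [Finset.card_compl, hcardP, hn]
    omega
  set S : ℕ := (m+1) * (D - m) with hSdef
  have hScast : (S:ℤ) = ((m:ℤ)+1) * ((D:ℤ) - m) := by
    rw [hSdef]
    have hmD : m ≤ D := by omega
    push_cast [Nat.cast_sub hmD]
    ring
  set c : ℕ := S + k - min k 1 with hcdef
  -- per-vertex lower bound on sum of distances
  have hvert : ∀ x : V, (c:ℤ) ≤ ∑ w : V, (G.dist x w : ℤ) := by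
    intro x
    set a : ℕ := G.dist x u with ha
    have hterm : ∀ i ∈ Finset.range (D+1), |(i:ℤ) - a| ≤ (G.dist x (p.getVert i) : ℤ) := by
      intro i hi
      rw [Finset.mem_range] at hi
      have e := hExact i (by omega)
      have t1 : G.dist u (p.getVert i) ≤ G.dist u x + G.dist x (p.getVert i) :=
        hconn.dist_triangle
      have t2 : G.dist x u ≤ G.dist x (p.getVert i) + G.dist (p.getVert i) u :=
        hconn.dist_triangle
      have hc1 : G.dist u x = G.dist x u := SimpleGraph.dist_comm
      have hc2 : G.dist (p.getVert i) u = G.dist u (p.getVert i) := SimpleGraph.dist_comm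
      rw [abs_le]
      constructor <;> omega
    have habs : ∀ i ∈ Finset.range (D+1),
        |2*(i:ℤ) - D| ≤ |(i:ℤ) - a| + |((D - i : ℕ):ℤ) - a| := by
      intro i hi
      rw [Finset.mem_range] at hi
      have hcast : ((D - i : ℕ):ℤ) = (D:ℤ) - i := by omega
      rw [hcast]
      have hrw : 2*(i:ℤ) - D = ((i:ℤ) - a) - (((D:ℤ) - i) - a) := by ring
      rw [hrw]
      exact abs_sub _ _
    have hrefl : ∑ i ∈ Finset.range (D+1), |((D - i:ℕ):ℤ) - a|
        = ∑ i ∈ Finset.range (D+1), |(i:ℤ) - a| := by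
      have := Finset.sum_range_reflect (fun i => |(i:ℤ) - a|) (D+1)
      simpa using this
    have hpath : 2 * (((m:ℤ)+1) * ((D:ℤ) - m))
        ≤ 2 * ∑ i ∈ Finset.range (D+1), (G.dist x (p.getVert i) : ℤ) := by
      have h0 := aux_gauss_abs D m (by omega) (by omega)
      have hstep : 2 * (((m:ℤ)+1) * ((D:ℤ) - m))
          ≤ 2 * ∑ i ∈ Finset.range (D+1), |(i:ℤ) - a| := by
        calc 2 * (((m:ℤ)+1) * ((D:ℤ) - m)) = ∑ i ∈ Finset.range (D+1), |2*(i:ℤ) - D| := h0.symm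
          _ ≤ ∑ i ∈ Finset.range (D+1), (|(i:ℤ) - a| + |((D - i:ℕ):ℤ) - a|) :=
              Finset.sum_le_sum habs
          _ = 2 * ∑ i ∈ Finset.range (D+1), |(i:ℤ) - a| := by
              rw [Finset.sum_add_distrib, hrefl]; ring
      have := Finset.sum_le_sum hterm
      linarith
    have hPsum : ∑ w ∈ P, (G.dist x w : ℤ)
        = ∑ i ∈ Finset.range (D+1), (G.dist x (p.getVert i) : ℤ) := by
      rw [hPdef]
      exact Finset.sum_image hinj
    have hsplit : ∑ w : V, (G.dist x w : ℤ)
        = ∑ w ∈ P, (G.dist x w : ℤ) + ∑ w ∈ Pᶜ, (G.dist x w : ℤ) :=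
      (Finset.sum_add_sum_compl P _).symm
    have hSleP : (S:ℤ) ≤ ∑ w ∈ P, (G.dist x w : ℤ) := by
      rw [hScast, hPsum]; linarith
    by_cases hx : x ∈ P
    · have h1 : (k:ℤ) ≤ ∑ w ∈ Pᶜ, (G.dist x w : ℤ) := by
        have : ∀ w ∈ Pᶜ, (1:ℤ) ≤ (G.dist x w : ℤ) := by
          intro w hw
          have hwx : x ≠ w := by
            intro h; rw [h] at hx; exact (Finset.mem_compl.mp hw) hx
          have := hconn.pos_dist_of_ne hwx
          exact_mod_cast this
        calc (k:ℤ) = ∑ _w ∈ Pᶜ, (1:ℤ) := by rw [Finset.sum_const, hcardPc]; simp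
          _ ≤ _ := Finset.sum_le_sum this
      have hck : (c:ℤ) ≤ (S:ℤ) + (k:ℤ) := by
        have : c ≤ S + k := by omega
        exact_mod_cast this
      linarith
    · have hxPc : x ∈ Pᶜ := Finset.mem_compl.mpr hx
      have hk1 : 1 ≤ k := by
        have := Finset.card_pos.mpr ⟨x, hxPc⟩
        omega
      have h1 : (k:ℤ) - 1 ≤ ∑ w ∈ Pᶜ, (G.dist x w : ℤ) := by
        have hsub : Pᶜ \ {x} ⊆ Pᶜ := Finset.sdiff_subset
        have hcard : (Pᶜ \ {x}).card = k - 1 := by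
          rw [Finset.card_sdiff_of_subset (by simpa using hxPc)]
          simp [hcardPc]
        have hone : ∀ w ∈ Pᶜ \ {x}, (1:ℤ) ≤ (G.dist x w : ℤ) := by
          intro w hw
          have hwx : x ≠ w := by
            intro h
            rw [Finset.mem_sdiff] at hw
            exact hw.2 (by simp [h])
          have := hconn.pos_dist_of_ne hwx
          exact_mod_cast this
        have step1 : ((k:ℤ) - 1) ≤ ∑ w ∈ Pᶜ \ {x}, (G.dist x w : ℤ) := by
          calc (k:ℤ) - 1 = ∑ _w ∈ Pᶜ \ {x}, (1:ℤ) := by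
                rw [Finset.sum_const, hcard]
                have : ((k - 1 : ℕ):ℤ) = (k:ℤ) - 1 := by omega
                simp [this]
            _ ≤ _ := Finset.sum_le_sum hone
        have step2 : ∑ w ∈ Pᶜ \ {x}, (G.dist x w : ℤ) ≤ ∑ w ∈ Pᶜ, (G.dist x w : ℤ) :=
          Finset.sum_le_sum_of_subset_of_nonneg hsub (by intro w _ _; positivity)
        linarith
      have hck : (c:ℤ) = (S:ℤ) + (k:ℤ) - 1 := by omega
      linarith
  -- bound on the infimum
  have hn1 : (0:ℝ) < (n:ℝ) - 1 := by
    have : (3:ℝ) ≤ (n:ℝ) := by exact_mod_cast h3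
    linarith
  have hinf : ((c:ℝ)) / ((n:ℝ) - 1) ≤ ⨅ x : V, (∑ w : V, (G.dist x w : ℝ)) / ((n:ℝ) - 1) := by
    apply le_ciInf
    intro x
    have hx := hvert x
    have hx' : (c:ℝ) ≤ ∑ w : V, (G.dist x w : ℝ) := by exact_mod_cast hx
    gcongr
  -- key integer inequalities
  have hparity : D = 2*m ∨ D = 2*m + 1 := by omega
  have hnDk : n = D + k + 1 := by omega
  have hccN : (k = 0 ∧ c = S) ∨ (1 ≤ k ∧ c = S + k - 1) := by omega
  have hnz : (n:ℤ) = (D:ℤ) + (k:ℤ) + 1 := by exact_mod_cast hnDk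
  have hcc : ((k:ℤ) = 0 ∧ (c:ℤ) = (S:ℤ)) ∨ (1 ≤ (k:ℤ) ∧ (c:ℤ) = (S:ℤ) + (k:ℤ) - 1) := by
    rcases hccN with ⟨h1, h2⟩ | ⟨h1, h2⟩
    · exact Or.inl ⟨by exact_mod_cast h1, by exact_mod_cast h2⟩
    · exact Or.inr ⟨by exact_mod_cast h1, by omega⟩
  have hKEY := aux_key (Dz := (D:ℤ)) (mz := (m:ℤ)) (kz := (k:ℤ)) (nz := (n:ℤ))
    (Sz := (S:ℤ)) (cz := (c:ℤ)) (by positivity) (by positivity) hScast hnz hcc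
  have hkey1 : 4*(D:ℤ)*((n:ℤ)-1) ≤ (3*(n:ℤ)-5)*((n:ℤ)-1) + 4*(c:ℤ) := by
    rcases hparity with hD | hD
    · exact hKEY.1 (by exact_mod_cast hD)
    · linarith [hKEY.2.2 (by exact_mod_cast hD)]
  have hkey2 : Even n → 4*(D:ℤ)*((n:ℤ)-1) + 1 ≤ (3*(n:ℤ)-5)*((n:ℤ)-1) + 4*(c:ℤ) := by
    intro hev
    obtain ⟨r, hr⟩ := hev
    rcases hparity with hD | hD
    · have hk1 : 1 ≤ k := by omega
      exact hKEY.2.1 (by exact_mod_cast hD) (by exact_mod_cast hk1)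
    · exact hKEY.2.2 (by exact_mod_cast hD)
  have hkey1R : 4*(D:ℝ)*((n:ℝ)-1) ≤ (3*(n:ℝ)-5)*((n:ℝ)-1) + 4*(c:ℝ) := by
    exact_mod_cast hkey1
  have ediv : (c:ℝ)/((n:ℝ)-1) * ((n:ℝ)-1) = (c:ℝ) := div_mul_cancel₀ _ (ne_of_gt hn1)
  constructor
  · intro _
    have hgoal : (D:ℝ) - (c:ℝ)/((n:ℝ)-1) ≤ (3*(n:ℝ)-5)/4 := by
      refine le_of_mul_le_mul_right ?_ hn1
      rw [sub_mul, ediv, div_mul_eq_mul_div]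
      rw [le_div_iff₀ (by norm_num : (0:ℝ) < 4)]
      nlinarith [hkey1R]
    linarith [hinf]
  · intro hev
    have hkey2R : 4*(D:ℝ)*((n:ℝ)-1) + 1 ≤ (3*(n:ℝ)-5)*((n:ℝ)-1) + 4*(c:ℝ) := by
      exact_mod_cast hkey2 hev
    have hgoal : (D:ℝ) - (c:ℝ)/((n:ℝ)-1) ≤ (3*(n:ℝ)-5)/4 - 1/(4*(n:ℝ)-4) := by
      refine le_of_mul_le_mul_right ?_ hn1
      rw [sub_mul, sub_mul, ediv]
      have e2 : 1/(4*(n:ℝ)-4) * ((n:ℝ)-1) = 1/4 := by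
        rw [show (4*(n:ℝ)-4) = 4*((n:ℝ)-1) by ring]
        field_simp
      rw [e2, div_mul_eq_mul_div]
      rw [show (3*(n:ℝ)-5)*((n:ℝ)-1)/4 - 1/4 = ((3*(n:ℝ)-5)*((n:ℝ)-1) - 1)/4 by ring]
      rw [le_div_iff₀ (by norm_num : (0:ℝ) < 4)]
      nlinarith [hkey2R]
    linarith [hinf]
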